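/- Let G be a connected graph, s a source vertex, and v any vertex of G. If G ∖ {v} has connected components C₁, …, C_p with arbitrarily chosen sources s_i ∈ C_i, then Σ_i Br(C_i, s_i) ≤ Br(G, s) · (2·Br(G, s) + 1). -/

import Mathlib

def IsSchedule {V : Type*} (G : SimpleGraph V) (S : ℕ → Set V) : Prop :=
  ∀ t : ℕ, S t ⊆ S (t + 1) ∧
    ∃ f : V → V,
      (∀ w ∈ S (t + 1) \ S t, f w ∈ S t ∧ G.Adj (f w) w) ∧
      ∀ u : V, Set.ncard {w | w ∈ S (t + 1) \ S t ∧ f w = u} ≤ 1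

noncomputable def broadcastTime {V : Type*} (G : SimpleGraph V) (s : V) : ℕ :=
  sInf {R | ∃ S : ℕ → Set V, S 0 = {s} ∧ IsSchedule G S ∧ S R = Set.univ}

set_option linter.unusedSectionVars false

namespace BrAux

variable {V : Type*} [Finite V]

/-- `Reach G A B R`: starting from informed set `A`, a schedule can make the informed set
exactly `B` after `R` rounds. -/
def Reach (G : SimpleGraph V) (A B : Set V) (R : ℕ) : Prop :=
  ∃ S : ℕ → Set V, S 0 = A ∧ IsSchedule G S ∧ S R = B

theorem reach_rfl {G : SimpleGraph V} {A : Set V} : Reach G A A 0 := by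
  refine ⟨fun _ => A, rfl, fun t => ⟨subset_rfl, id, fun w hw => absurd hw.2 (not_not_intro hw.1), fun u => ?_⟩, rfl⟩
  have : {w | w ∈ (A \ A) ∧ id w = u} = ∅ := by simp
  simp [this]

theorem reach_trans {G : SimpleGraph V} {A B C : Set V} {R₁ R₂ : ℕ}
    (h₁ : Reach G A B R₁) (h₂ : Reach G B C R₂) : Reach G A C (R₁ + R₂) := by
  obtain ⟨S, hS0, hS, hSR⟩ := h₁
  obtain ⟨T, hT0, hT, hTR⟩ := h₂
  refine ⟨fun t => if t ≤ R₁ then S t else T (t - R₁), by simp [hS0], fun t => ?_, ?_⟩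
  · by_cases ht : t + 1 ≤ R₁
    · have ht' : t ≤ R₁ := le_trans (Nat.le_succ t) ht
      simpa [ht, ht'] using hS t
    · by_cases ht' : t ≤ R₁
      · -- t = R₁
        have htR : t = R₁ := le_antisymm ht' (by omega)
        have h1 : t + 1 - R₁ = 1 := by omega
        have hb : S t = T 0 := by rw [htR, hSR, hT0]
        simpa [ht, ht', h1, hb] using hT 0
      · have h1 : t + 1 - R₁ = (t - R₁) + 1 := by omega
        simpa [ht, ht', h1, le_trans (Nat.le_succ t) , show ¬ (t+1 ≤ R₁) by omega] using hT (t - R₁)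
  · by_cases h : R₂ = 0
    · subst h; simp [hSR, ← hT0, hTR]
    · have : ¬ (R₁ + R₂ ≤ R₁) := by omega
      simp [this, hTR]

/-- freeze for one round -/
theorem reach_succ_self {G : SimpleGraph V} {A : Set V} : Reach G A A 1 := by
  refine ⟨fun _ => A, rfl, fun t => ⟨subset_rfl, id, fun w hw => absurd hw.2 (not_not_intro hw.1), fun u => ?_⟩, rfl⟩
  have : {w | w ∈ (A \ A) ∧ id w = u} = ∅ := by simp
  simp [this]

theorem reach_mono_time {G : SimpleGraph V} {A B : Set V} {R R' : ℕ}
    (h : Reach G A B R) (hR : R ≤ R') : Reach G A B R' := by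
  obtain ⟨k, rfl⟩ := Nat.exists_eq_add_of_le hR
  clear hR
  induction k with
  | zero => exact h
  | succ n ih =>
    have h2 := reach_trans ih (reach_succ_self (G := G) (A := B))
    exact h2

theorem reach_union {G : SimpleGraph V} {A B : Set V} {R : ℕ} (D : Set V)
    (h : Reach G A B R) : Reach G (A ∪ D) (B ∪ D) R := by
  obtain ⟨S, hS0, hS, hSR⟩ := h
  refine ⟨fun t => S t ∪ D, by simp only []; rw [hS0], fun t => ?_, by simp only []; rw [hSR]⟩
  obtain ⟨hsub, f, hf1, hf2⟩ := hS t
  refine ⟨Set.union_subset_union_left D hsub, f, fun w hw => ?_, fun u => ?_⟩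
  · have hw' : w ∈ S (t+1) \ S t := ⟨by rcases hw.1 with h|h; exact h; exact absurd (Or.inr h) hw.2, fun hc => hw.2 (Or.inl hc)⟩
    exact ⟨Or.inl (hf1 w hw').1, (hf1 w hw').2⟩
  · refine le_trans (Set.ncard_le_ncard ?_ (Set.toFinite _)) (hf2 u)
    rintro w ⟨hw1, hw2⟩
    exact ⟨⟨by rcases hw1.1 with h|h; exact h; exact absurd (Or.inr h) hw1.2, fun hc => hw1.2 (Or.inl hc)⟩, hw2⟩

theorem reach_step {G : SimpleGraph V} {A : Set V} {a b : V}
    (ha : a ∈ A) (hab : G.Adj a b) : Reach G A (insert b A) 1 := by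
  refine ⟨fun t => if t = 0 then A else insert b A, rfl, fun t => ?_, by simp⟩
  by_cases ht : t = 0
  · subst ht
    refine ⟨by simp [Set.subset_insert], fun _ => a, fun w hw => ?_, fun u => ?_⟩
    · simp only [if_pos rfl] at hw
      have : w = b := by
        rcases hw with ⟨hw1, hw2⟩
        simp only [show (0:ℕ)+1 ≠ 0 by omega, if_neg] at hw1
        rcases hw1 with h|h
        · exact h
        · exact absurd h hw2
      subst this; exact ⟨ha, hab⟩
    · refine le_trans (Set.ncard_le_ncard (t := {b}) ?_ (Set.finite_singleton b)) (by simp)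
      rintro w ⟨hw1, _⟩
      simp only [if_pos rfl, show (0:ℕ)+1 ≠ 0 by omega, if_neg] at hw1
      rcases hw1 with ⟨h|h, hw2⟩
      · exact h
      · exact absurd h hw2
  · have ht1 : t + 1 ≠ 0 := by omega
    refine ⟨by simp [ht, ht1], id, fun w hw => ?_, fun u => ?_⟩
    · simp [ht, ht1] at hw
    · simp only [if_neg ht, if_neg ht1]
      have : {w | w ∈ (insert b A \ insert b A) ∧ id w = u} = ∅ := by simp
      calc Set.ncard {w | w ∈ (insert b A \ insert b A) ∧ id w = u} = 0 := by simp [this]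
        _ ≤ 1 := by omega


theorem reach_walk {G : SimpleGraph V} :
    ∀ {a b : V} (p : G.Walk a b) {A : Set V}, a ∈ A →
      Reach G A (A ∪ {x | x ∈ p.support}) p.length := by
  intro a b p
  induction p with
  | nil =>
    intro A ha
    convert reach_rfl using 2
    ext x
    simp only [SimpleGraph.Walk.support_nil, List.mem_singleton, Set.mem_union, Set.mem_setOf_eq]
    exact ⟨fun h => h.elim id (fun hx => hx ▸ ha), Or.inl⟩
    rfl
    exact inferInstance
  | @cons a c b h p ih =>
    intro A ha
    have h1 : Reach G A (insert c A) 1 := reach_step ha h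
    have h2 := ih (A := insert c A) (Set.mem_insert c A)
    have h3 := reach_trans h1 h2
    have hset : insert c A ∪ {x | x ∈ p.support} = A ∪ {x | x ∈ (SimpleGraph.Walk.cons h p).support} := by
      ext x
      simp only [Set.mem_union, Set.mem_insert_iff, Set.mem_setOf_eq, SimpleGraph.Walk.support_cons,
        List.mem_cons]
      have hc : c ∈ p.support := SimpleGraph.Walk.start_mem_support p
      constructor
      · rintro ((rfl | hx) | hx)
        · exact Or.inr (Or.inr hc)
        · exact Or.inl hx
        · exact Or.inr (Or.inr hx)
      · rintro (hx | (rfl | hx))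
        · exact Or.inl (Or.inr hx)
        · exact Or.inl (Or.inr ha)
        · exact Or.inr hx
    rw [hset] at h3
    have hlen : (SimpleGraph.Walk.cons h p).length = 1 + p.length := by
      rw [SimpleGraph.Walk.length_cons]; omega
    rw [hlen]
    exact h3

theorem broadcastTime_le {G : SimpleGraph V} {x : V} {R : ℕ}
    (h : Reach G {x} Set.univ R) : broadcastTime G x ≤ R := by
  obtain ⟨S, hS0, hS, hSR⟩ := h
  exact Nat.sInf_le ⟨S, hS0, hS, hSR⟩

theorem reach_exists {G : SimpleGraph V} (hG : G.Preconnected) :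
    ∀ (n : ℕ) (A : Set V), A.Nonempty → Set.ncard Aᶜ ≤ n → ∃ R, Reach G A Set.univ R := by
  intro n
  induction n with
  | zero =>
    intro A hA hcard
    have h1 : Aᶜ = ∅ := Set.ncard_eq_zero (Set.toFinite _) |>.mp (Nat.le_zero.mp hcard)
    have h2 : A = Set.univ := by rw [← Set.compl_empty_iff]; exact h1
    exact ⟨0, h2 ▸ reach_rfl⟩
  | succ n ih =>
    intro A hA hcard
    by_cases hAu : A = Set.univ
    · exact ⟨0, hAu ▸ reach_rfl⟩
    · have hne : Set.Nonempty Aᶜ := by rw [Set.nonempty_compl]; exact hAu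
      obtain ⟨b, hb⟩ := hne
      obtain ⟨a, ha⟩ := hA
      obtain ⟨p⟩ := hG a b
      obtain ⟨d, _, hd1, hd2⟩ := p.exists_boundary_dart A ha hb
      have hstep := reach_step hd1 d.adj
      have hins : Set.ncard (insert d.snd A)ᶜ ≤ n := by
        have hsub : (insert d.snd A)ᶜ ⊆ Aᶜ := Set.compl_subset_compl.mpr (Set.subset_insert _ _)
        have hne : (insert d.snd A)ᶜ ≠ Aᶜ := by
          intro he
          have : d.snd ∈ (insert d.snd A)ᶜ := he ▸ hd2
          exact this (Set.mem_insert _ _)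
        have hss : (insert d.snd A)ᶜ ⊂ Aᶜ := lt_of_le_of_ne hsub hne
        have := Set.ncard_lt_ncard hss (Set.toFinite Aᶜ)
        omega
      obtain ⟨R, hR⟩ := ih (insert d.snd A) ⟨a, Set.mem_insert_of_mem _ ha⟩ hins
      exact ⟨1 + R, reach_trans hstep hR⟩

theorem walk_toInduce {G : SimpleGraph V} {U : Set V} :
    ∀ {a b : V} (p : G.Walk a b) (ha : a ∈ U) (hb : b ∈ U),
      (∀ x ∈ p.support, x ∈ U) → Nonempty ((G.induce U).Walk ⟨a, ha⟩ ⟨b, hb⟩) := by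
  intro a b p
  induction p with
  | nil => exact fun ha hb _ => ⟨SimpleGraph.Walk.nil⟩
  | @cons a c b h p ih =>
    intro ha hb hp
    have hc : c ∈ U := hp c (by simp [SimpleGraph.Walk.support_cons, SimpleGraph.Walk.start_mem_support])
    have hadj : (G.induce U).Adj ⟨a, ha⟩ ⟨c, hc⟩ := h
    obtain ⟨q⟩ := ih hc hb (fun x hx => hp x (by simp [SimpleGraph.Walk.support_cons, hx]))
    exact ⟨SimpleGraph.Walk.cons hadj q⟩


section Entry

variable {s v : V} {τ : V → ℕ} {par : V → V}

open Classical in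
/-- fuel-based ancestor-finding function -/
noncomputable def entryAux (s v : V) (par : V → V) : ℕ → V → V
  | 0, w => w
  | (n+1), w => if w = s ∨ par w = v then w else entryAux s v par n (par w)

variable (hτ0 : ∀ w, τ w = 0 → w = s) (hdec : ∀ w, w ≠ s → τ (par w) < τ w)

include hτ0 hdec

lemma entryAux_fuel : ∀ n m w, τ w ≤ n → τ w ≤ m →
    entryAux s v par n w = entryAux s v par m w := by
  intro n
  induction n with
  | zero =>
    intro m w hn hm
    have hws : w = s := hτ0 w (Nat.le_zero.mp hn)
    cases m with
    | zero => rfl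
    | succ m' => simp [entryAux, hws]
  | succ n ih =>
    intro m w hn hm
    by_cases hc : w = s ∨ par w = v
    · cases m with
      | zero =>
        have hws : w = s := hτ0 w (Nat.le_zero.mp hm)
        simp [entryAux, hws]
      | succ m' => simp [entryAux, hc]
    · push_neg at hc
      have hws : w ≠ s := hc.1
      have hlt : τ (par w) < τ w := hdec w hws
      cases m with
      | zero => exact absurd (hτ0 w (Nat.le_zero.mp hm)) hws
      | succ m' =>
        simp only [entryAux, if_neg (not_or.mpr ⟨hc.1, hc.2⟩)]
        exact ih m' (par w) (by omega) (by omega)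

omit hτ0 hdec

/-- the entry point of `w`: end of the parent chain, stopping at `s` or a child of `v`. -/
noncomputable def entryF (s v : V) (τ : V → ℕ) (par : V → V) (w : V) : V :=
  entryAux s v par (τ w) w

include hτ0 hdec

lemma entryF_eq_self {w : V} (h : w = s ∨ par w = v) : entryF s v τ par w = w := by
  unfold entryF
  cases hτ : τ w with
  | zero => rfl
  | succ n => simp [entryAux, h]

lemma entryF_eq_par {w : V} (h1 : w ≠ s) (h2 : par w ≠ v) :
    entryF s v τ par w = entryF s v τ par (par w) := by
  unfold entryF
  have hlt : τ (par w) < τ w := hdec w h1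
  cases hτ : τ w with
  | zero => exact absurd (hτ0 w hτ) h1
  | succ n =>
    simp only [entryAux, if_neg (not_or.mpr ⟨h1, h2⟩)]
    exact entryAux_fuel hτ0 hdec n (τ (par w)) (par w) (by omega) le_rfl

/-- the parent chain from `w` down to its entry point. -/
lemma entryF_chain : ∀ (N : ℕ) (w : V), τ w ≤ N →
    ∃ n, n + τ (entryF s v τ par w) ≤ τ w ∧ par^[n] w = entryF s v τ par w ∧
      ∀ m, m < n → entryF s v τ par (par^[m] w) = entryF s v τ par w ∧
        par^[m] w ≠ s ∧ par (par^[m] w) ≠ v := by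
  intro N
  induction N with
  | zero =>
    intro w hN
    have hws : w = s := hτ0 w (Nat.le_zero.mp hN)
    have he : entryF s v τ par w = w := entryF_eq_self hτ0 hdec (Or.inl hws)
    exact ⟨0, by simp [he], by simp [he], fun m hm => absurd hm (by omega)⟩
  | succ N ih =>
    intro w hN
    by_cases hc : w = s ∨ par w = v
    · have he : entryF s v τ par w = w := entryF_eq_self hτ0 hdec hc
      exact ⟨0, by simp [he], by simp [he], fun m hm => absurd hm (by omega)⟩
    · push_neg at hc
      have hlt : τ (par w) < τ w := hdec w hc.1
      have he : entryF s v τ par w = entryF s v τ par (par w) :=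
        entryF_eq_par hτ0 hdec hc.1 hc.2
      obtain ⟨n, hn1, hn2, hn3⟩ := ih (par w) (by omega)
      refine ⟨n + 1, by rw [he]; omega, ?_, ?_⟩
      · rw [Function.iterate_succ_apply, hn2, he]
      · intro m hm
        cases m with
        | zero => exact ⟨rfl, hc.1, hc.2⟩
        | succ m' =>
          rw [Function.iterate_succ_apply]
          have := hn3 m' (by omega)
          exact ⟨by rw [this.1, he], this.2.1, this.2.2⟩

lemma entryF_isEntry_aux : ∀ (N : ℕ) (w : V), τ w ≤ N →
    entryF s v τ par w = s ∨ par (entryF s v τ par w) = v := by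
  intro N
  induction N with
  | zero =>
    intro w hN
    have hws : w = s := hτ0 w (Nat.le_zero.mp hN)
    rw [entryF_eq_self hτ0 hdec (Or.inl hws)]
    exact Or.inl hws
  | succ N ih =>
    intro w hN
    by_cases hc : w = s ∨ par w = v
    · rw [entryF_eq_self hτ0 hdec hc]; exact hc
    · push_neg at hc
      rw [entryF_eq_par hτ0 hdec hc.1 hc.2]
      exact ih (par w) (by have := hdec w hc.1; omega)

lemma entryF_isEntry (w : V) :
    entryF s v τ par w = s ∨ par (entryF s v τ par w) = v :=
  entryF_isEntry_aux hτ0 hdec (τ w) w le_rfl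

lemma entryF_ne_aux : ∀ (N : ℕ) (w : V), τ w ≤ N → w ≠ v → entryF s v τ par w ≠ v := by
  intro N
  induction N with
  | zero =>
    intro w hN hw
    rw [entryF_eq_self hτ0 hdec (Or.inl (hτ0 w (Nat.le_zero.mp hN)))]
    exact hw
  | succ N ih =>
    intro w hN hw
    by_cases hc : w = s ∨ par w = v
    · rw [entryF_eq_self hτ0 hdec hc]; exact hw
    · push_neg at hc
      rw [entryF_eq_par hτ0 hdec hc.1 hc.2]
      exact ih (par w) (by have := hdec w hc.1; omega) hc.2

lemma entryF_ne (w : V) (hw : w ≠ v) : entryF s v τ par w ≠ v :=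
  entryF_ne_aux hτ0 hdec (τ w) w le_rfl hw

/-- idempotence -/
lemma entryF_idem (w : V) : entryF s v τ par (entryF s v τ par w) = entryF s v τ par w := by
  rcases entryF_isEntry hτ0 hdec w with h | h
  · exact entryF_eq_self hτ0 hdec (Or.inl h)
  · exact entryF_eq_self hτ0 hdec (Or.inr h)

end Entry


noncomputable def entriesOf {V : Type*} [Finite V] (G : SimpleGraph V) (s v : V)
    (τ : V → ℕ) (par : V → V) (c : (G.induce {u : V | u ≠ v}).ConnectedComponent) : Finset V :=
  (Set.toFinite {e : V | ∃ x : ↥c.supp, entryF s v τ par x.1.1 = e}).toFinset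

lemma mem_entriesOf {V : Type*} [Finite V] {G : SimpleGraph V} {s v : V}
    {τ : V → ℕ} {par : V → V} {c : (G.induce {u : V | u ≠ v}).ConnectedComponent} {e : V} :
    e ∈ entriesOf G s v τ par c ↔ ∃ x : ↥c.supp, entryF s v τ par x.1.1 = e := by
  unfold entriesOf
  rw [Set.Finite.mem_toFinset]
  rfl

section Main

variable {G : SimpleGraph V} {s v : V} {τ : V → ℕ} {par : V → V} {B : ℕ}

variable (hτ0 : ∀ w, τ w = 0 → w = s) (hs0 : τ s = 0)
  (hdec : ∀ w, w ≠ s → τ (par w) < τ w)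
  (hadjpar : ∀ w, w ≠ s → G.Adj (par w) w)
  (hcount : ∀ (t : ℕ) (u : V), Set.ncard {w | τ w = t + 1 ∧ par w = u} ≤ 1)
  (hτB : ∀ w, τ w ≤ B)

include hτ0 hdec hadjpar in
lemma chain_walk {c : (G.induce {u : V | u ≠ v}).ConnectedComponent} :
    ∀ (n : ℕ) (w : V) (hw : w ≠ v) (hwc : (⟨w, hw⟩ : {u : V | u ≠ v}) ∈ c.supp),
      par^[n] w = entryF s v τ par w →
      (∀ m, m < n → entryF s v τ par (par^[m] w) = entryF s v τ par w ∧
        par^[m] w ≠ s ∧ par (par^[m] w) ≠ v) →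
      ∃ (hev : entryF s v τ par w ≠ v)
        (hec : (⟨entryF s v τ par w, hev⟩ : {u : V | u ≠ v}) ∈ c.supp)
        (q : ((G.induce {u : V | u ≠ v}).induce c.supp).Walk
          ⟨⟨entryF s v τ par w, hev⟩, hec⟩ ⟨⟨w, hw⟩, hwc⟩),
        (∀ x ∈ q.support, entryF s v τ par x.1.1 = entryF s v τ par w) ∧ q.length ≤ n := by
  intro n
  induction n with
  | zero =>
    intro w hw hwc hit _
    have he : entryF s v τ par w = w := by
      rw [Function.iterate_zero_apply] at hit; exact hit.symm
    have hev : entryF s v τ par w ≠ v := by rw [he]; exact hw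
    refine ⟨hev, ?_, ?_⟩
    · rw [show (⟨entryF s v τ par w, hev⟩ : {u : V | u ≠ v}) = ⟨w, hw⟩ from Subtype.ext he]
      exact hwc
    · have hpt : (⟨⟨w, hw⟩, hwc⟩ : ↥c.supp) =
          ⟨⟨entryF s v τ par w, hev⟩, by
            rw [show (⟨entryF s v τ par w, hev⟩ : {u : V | u ≠ v}) = ⟨w, hw⟩ from Subtype.ext he]
            exact hwc⟩ := by
        exact Subtype.ext (Subtype.ext he.symm)
      refine ⟨SimpleGraph.Walk.nil.copy hpt rfl, ?_, ?_⟩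
      · intro x hx
        rw [SimpleGraph.Walk.support_copy, SimpleGraph.Walk.support_nil] at hx
        simp only [List.mem_singleton] at hx
        subst hx
        rfl
      · simp
  | succ n ih =>
    intro w hw hwc hit hcond
    obtain ⟨-, hws, hpv⟩ := hcond 0 (Nat.succ_pos n)
    rw [Function.iterate_zero_apply] at hws hpv
    have he : entryF s v τ par w = entryF s v τ par (par w) :=
      entryF_eq_par hτ0 hdec hws hpv
    have hadj : G.Adj (par w) w := hadjpar w hws
    have hadj' : (G.induce {u : V | u ≠ v}).Adj ⟨par w, hpv⟩ ⟨w, hw⟩ := hadj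
    have hpc : (⟨par w, hpv⟩ : {u : V | u ≠ v}) ∈ c.supp := by
      rw [SimpleGraph.ConnectedComponent.mem_supp_iff] at hwc ⊢
      rw [← hwc]
      exact SimpleGraph.ConnectedComponent.connectedComponentMk_eq_of_adj hadj'
    have hit' : par^[n] (par w) = entryF s v τ par (par w) := by
      rw [← Function.iterate_succ_apply, hit, he]
    have hcond' : ∀ m, m < n → entryF s v τ par (par^[m] (par w)) = entryF s v τ par (par w) ∧
        par^[m] (par w) ≠ s ∧ par (par^[m] (par w)) ≠ v := by
      intro m hm
      have := hcond (m + 1) (by omega)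
      rw [Function.iterate_succ_apply] at this
      exact ⟨by rw [this.1, he], this.2.1, this.2.2⟩
    obtain ⟨hev', hec', q', hq'supp, hq'len⟩ := ih (par w) hpv hpc hit' hcond'
    have hev : entryF s v τ par w ≠ v := by rw [he]; exact hev'
    have heq : (⟨⟨entryF s v τ par (par w), hev'⟩, hec'⟩ : ↥c.supp) =
        ⟨⟨entryF s v τ par w, hev⟩, by
          rw [show (⟨entryF s v τ par w, hev⟩ : {u : V | u ≠ v})
            = ⟨entryF s v τ par (par w), hev'⟩ from Subtype.ext he]
          exact hec'⟩ := Subtype.ext (Subtype.ext he.symm)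
    have hadjc : ((G.induce {u : V | u ≠ v}).induce c.supp).Adj ⟨⟨par w, hpv⟩, hpc⟩ ⟨⟨w, hw⟩, hwc⟩ := hadj
    refine ⟨hev, _, (q'.concat hadjc).copy heq rfl, ?_, ?_⟩
    · intro x hx
      rw [SimpleGraph.Walk.support_copy, SimpleGraph.Walk.support_concat] at hx
      rw [List.mem_append] at hx
      rcases hx with hx | hx
      rotate_left
      · simp only [List.mem_singleton] at hx
        subst hx; rfl
      · rw [hq'supp x hx, ← he]
    · rw [SimpleGraph.Walk.length_copy, SimpleGraph.Walk.length_concat]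
      omega


include hτ0 hs0 hdec hadjpar hcount hτB in
lemma cluster_reach {c : (G.induce {u : V | u ≠ v}).ConnectedComponent}
    (D : Set ↥c.supp) (z : ↥c.supp) (hz : z ∈ D) :
    Reach ((G.induce {u : V | u ≠ v}).induce c.supp) D
      (D ∪ {x : ↥c.supp | entryF s v τ par x.1.1 = entryF s v τ par z.1.1})
      (2 * (B - τ (entryF s v τ par z.1.1))) := by
  classical
  obtain ⟨n, hn1, hn2, hn3⟩ := entryF_chain hτ0 hdec (τ z.1.1) z.1.1 le_rfl
  obtain ⟨hev, hec, q, hqsupp, hqlen⟩ :=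
    chain_walk hτ0 hdec hadjpar (c := c) n z.1.1 z.1.2 z.2 hn2 hn3
  have h1 : Reach ((G.induce {u : V | u ≠ v}).induce c.supp) D (D ∪ {x | x ∈ q.reverse.support}) q.reverse.length :=
    reach_walk q.reverse hz
  have hqsupp' : ∀ x ∈ q.reverse.support, entryF s v τ par x.1.1 = entryF s v τ par z.1.1 := by
    intro x hx
    rw [SimpleGraph.Walk.support_reverse, List.mem_reverse] at hx
    exact hqsupp x hx
  have heD₁ : (⟨⟨entryF s v τ par z.1.1, hev⟩, hec⟩ : ↥c.supp) ∈ D ∪ {x | x ∈ q.reverse.support} := by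
    refine Or.inr ?_
    rw [Set.mem_setOf_eq, SimpleGraph.Walk.support_reverse, List.mem_reverse]
    exact SimpleGraph.Walk.start_mem_support q
  have hone : ∀ x : ↥c.supp, entryF s v τ par x.1.1 = entryF s v τ par z.1.1 → τ x.1.1 ≤ τ (entryF s v τ par z.1.1) →
      x = (⟨⟨entryF s v τ par z.1.1, hev⟩, hec⟩ : ↥c.supp) := by
    intro x hx1 hx2
    obtain ⟨n', h1', h2', -⟩ := entryF_chain hτ0 hdec (τ x.1.1) x.1.1 le_rfl
    rw [hx1] at h1'
    have hn0 : n' = 0 := by omega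
    rw [hn0, Function.iterate_zero_apply] at h2'
    exact Subtype.ext (Subtype.ext (by rw [h2', hx1]))
  have hmemc : ∀ (x : ↥c.supp) (h : par x.1.1 ≠ v), x.1.1 ≠ s →
      (⟨par x.1.1, h⟩ : {u : V | u ≠ v}) ∈ c.supp := by
    intro x h hxs
    have hadj' : (G.induce {u : V | u ≠ v}).Adj ⟨par x.1.1, h⟩ x.1 :=
      hadjpar x.1.1 hxs
    have hx2 := x.2
    rw [SimpleGraph.ConnectedComponent.mem_supp_iff] at hx2
    rw [SimpleGraph.ConnectedComponent.mem_supp_iff]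
    exact (SimpleGraph.ConnectedComponent.connectedComponentMk_eq_of_adj hadj').trans hx2
  have hf'spec : ∀ (x : ↥c.supp), par x.1.1 ≠ v → x.1.1 ≠ s →
      ((fun x : ↥c.supp =>
        if h : ∃ y : ↥c.supp, y.1.1 = par x.1.1 then h.choose else x) x).1.1 = par x.1.1 := by
    intro x h hxs
    have hex : ∃ y : ↥c.supp, y.1.1 = par x.1.1 := ⟨⟨⟨par x.1.1, h⟩, hmemc x h hxs⟩, rfl⟩
    simp only [dif_pos hex]
    exact hex.choose_spec
  have hdiff : ∀ (u : ℕ) (x : ↥c.supp),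
      x ∈ ((D ∪ {x | x ∈ q.reverse.support}) ∪
          {x : ↥c.supp | entryF s v τ par x.1.1 = entryF s v τ par z.1.1 ∧ τ x.1.1 ≤ τ (entryF s v τ par z.1.1) + (u+1)}) →
      x ∉ ((D ∪ {x | x ∈ q.reverse.support}) ∪
          {x : ↥c.supp | entryF s v τ par x.1.1 = entryF s v τ par z.1.1 ∧ τ x.1.1 ≤ τ (entryF s v τ par z.1.1) + u}) →
      entryF s v τ par x.1.1 = entryF s v τ par z.1.1 ∧ τ x.1.1 = τ (entryF s v τ par z.1.1) + u + 1 ∧ x.1.1 ≠ s ∧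
        par x.1.1 ≠ v ∧ entryF s v τ par (par x.1.1) = entryF s v τ par z.1.1 ∧ τ (par x.1.1) ≤ τ (entryF s v τ par z.1.1) + u := by
    intro u x hx1 hx2
    have hxD₁ : x ∉ D ∪ {x | x ∈ q.reverse.support} := fun h => hx2 (Or.inl h)
    have hent : entryF s v τ par x.1.1 = entryF s v τ par z.1.1 := by
      rcases hx1 with h | h
      · exact absurd h hxD₁
      · exact h.1
    have hτx : τ x.1.1 = τ (entryF s v τ par z.1.1) + u + 1 := by
      have hle : τ x.1.1 ≤ τ (entryF s v τ par z.1.1) + (u + 1) := by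
        rcases hx1 with h | h
        · exact absurd h hxD₁
        · exact h.2
      have hgt : ¬ τ x.1.1 ≤ τ (entryF s v τ par z.1.1) + u := fun h => hx2 (Or.inr ⟨hent, h⟩)
      omega
    have hxs : x.1.1 ≠ s := by
      intro h
      rw [h, hs0] at hτx
      omega
    have hxpv : par x.1.1 ≠ v := by
      intro h
      have h5 := entryF_eq_self (s := s) (τ := τ) hτ0 hdec (Or.inr h)
      rw [h5] at hent
      rw [hent] at hτx
      omega
    refine ⟨hent, hτx, hxs, hxpv, ?_, ?_⟩
    · rw [← entryF_eq_par hτ0 hdec hxs hxpv]; exact hent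
    · have := hdec x.1.1 hxs
      omega
  have hsched : IsSchedule ((G.induce {u : V | u ≠ v}).induce c.supp)
      (fun u => (D ∪ {x | x ∈ q.reverse.support}) ∪
        {x : ↥c.supp | entryF s v τ par x.1.1 = entryF s v τ par z.1.1 ∧ τ x.1.1 ≤ τ (entryF s v τ par z.1.1) + u}) := by
    intro u
    constructor
    · rintro x (hx | hx)
      · exact Or.inl hx
      · exact Or.inr ⟨hx.1, by have := hx.2; omega⟩
    · refine ⟨fun x : ↥c.supp =>
        if h : ∃ y : ↥c.supp, y.1.1 = par x.1.1 then h.choose else x,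
        fun x hx => ?_, fun y => ?_⟩
      · obtain ⟨hent, hτx, hxs, hxpv, hpe, hpτ⟩ := hdiff u x hx.1 hx.2
        have hval := hf'spec x hxpv hxs
        constructor
        · refine Or.inr ⟨?_, ?_⟩
          · rw [hval]; exact hpe
          · rw [hval]; exact hpτ
        · show (((G.induce {u : V | u ≠ v}).induce c.supp)).Adj _ x
          have hGadj : G.Adj ((fun x : ↥c.supp =>
              if h : ∃ y : ↥c.supp, y.1.1 = par x.1.1 then h.choose else x) x).1.1 x.1.1 := by
            rw [hval]
            exact hadjpar x.1.1 hxs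
          exact hGadj
      · rw [Set.ncard_le_one (Set.toFinite _)]
        rintro a ⟨ha, hfa⟩ b ⟨hb, hfb⟩
        obtain ⟨henta, hτa, has, hapv, -, -⟩ := hdiff u a ha.1 ha.2
        obtain ⟨hentb, hτb, hbs, hbpv, -, -⟩ := hdiff u b hb.1 hb.2
        have hpa : par a.1.1 = y.1.1 := by rw [← hf'spec a hapv has, hfa]
        have hpb : par b.1.1 = y.1.1 := by rw [← hf'spec b hbpv hbs, hfb]
        have hsub : ({a.1.1, b.1.1} : Set V) ⊆
            {w | τ w = (τ (entryF s v τ par z.1.1) + u) + 1 ∧ par w = y.1.1} := by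
          rintro w (rfl | rfl)
          · exact ⟨by omega, hpa⟩
          · exact ⟨by omega, hpb⟩
        by_contra hab
        have hne : a.1.1 ≠ b.1.1 := fun h => hab (Subtype.ext (Subtype.ext h))
        have h2 : ({a.1.1, b.1.1} : Set V).ncard = 2 := Set.ncard_pair hne
        have h3 := Set.ncard_le_ncard hsub (Set.toFinite _)
        have h4 := hcount (τ (entryF s v τ par z.1.1) + u) y.1.1
        omega
  have hT0 : ((D ∪ {x | x ∈ q.reverse.support}) ∪
      {x : ↥c.supp | entryF s v τ par x.1.1 = entryF s v τ par z.1.1 ∧ τ x.1.1 ≤ τ (entryF s v τ par z.1.1) + 0}) =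
      D ∪ {x | x ∈ q.reverse.support} := by
    apply Set.eq_of_subset_of_subset
    · rintro x (hx | hx)
      · exact hx
      · rw [hone x hx.1 (by have := hx.2; omega)]; exact heD₁
    · exact Set.subset_union_left
  have hTend : ((D ∪ {x | x ∈ q.reverse.support}) ∪
      {x : ↥c.supp | entryF s v τ par x.1.1 = entryF s v τ par z.1.1 ∧ τ x.1.1 ≤ τ (entryF s v τ par z.1.1) + (B - τ (entryF s v τ par z.1.1))}) =
      D ∪ {x : ↥c.supp | entryF s v τ par x.1.1 = entryF s v τ par z.1.1} := by
    have hτe : τ (entryF s v τ par z.1.1) + (B - τ (entryF s v τ par z.1.1)) = B := by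
      have := hτB (entryF s v τ par z.1.1)
      omega
    apply Set.eq_of_subset_of_subset
    · rintro x (hx | hx)
      · rcases hx with hx | hx
        · exact Or.inl hx
        · exact Or.inr (hqsupp' x hx)
      · exact Or.inr hx.1
    · rintro x (hx | hx)
      · exact Or.inl (Or.inl hx)
      · exact Or.inr ⟨hx, by rw [hτe]; exact hτB x.1.1⟩
  have h2 : Reach ((G.induce {u : V | u ≠ v}).induce c.supp) (D ∪ {x | x ∈ q.reverse.support})
      (D ∪ {x : ↥c.supp | entryF s v τ par x.1.1 = entryF s v τ par z.1.1}) (B - τ (entryF s v τ par z.1.1)) := by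
    refine ⟨fun u => (D ∪ {x | x ∈ q.reverse.support}) ∪
      {x : ↥c.supp | entryF s v τ par x.1.1 = entryF s v τ par z.1.1 ∧ τ x.1.1 ≤ τ (entryF s v τ par z.1.1) + u}, hT0, hsched, hTend⟩
  have htot := reach_trans h1 h2
  refine reach_mono_time htot ?_
  have hlen : q.reverse.length = q.length := SimpleGraph.Walk.length_reverse q
  have hτz : τ z.1.1 ≤ B := hτB z.1.1
  omega


include hτ0 hdec hadjpar in
lemma ent_mem_supp {c : (G.induce {u : V | u ≠ v}).ConnectedComponent} (x : ↥c.supp) :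
    ∃ (hev : entryF s v τ par x.1.1 ≠ v), (⟨entryF s v τ par x.1.1, hev⟩ : {u : V | u ≠ v}) ∈ c.supp := by
  obtain ⟨n, hn1, hn2, hn3⟩ := entryF_chain hτ0 hdec (τ x.1.1) x.1.1 le_rfl
  obtain ⟨hev, hec, -, -, -⟩ :=
    chain_walk hτ0 hdec hadjpar (c := c) n x.1.1 x.1.2 x.2 hn2 hn3
  exact ⟨hev, hec⟩

lemma comp_reachable {c : (G.induce {u : V | u ≠ v}).ConnectedComponent} (x y : ↥c.supp) :
    (((G.induce {u : V | u ≠ v}).induce c.supp)).Reachable x y := by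
  classical
  have hx := x.2
  have hy := y.2
  rw [SimpleGraph.ConnectedComponent.mem_supp_iff] at hx hy
  have hreach : (G.induce {u : V | u ≠ v}).Reachable x.1 y.1 :=
    SimpleGraph.ConnectedComponent.exact (hx.trans hy.symm)
  obtain ⟨p⟩ := hreach
  have hsupp : ∀ u ∈ p.support, u ∈ c.supp := by
    intro u hu
    rw [SimpleGraph.ConnectedComponent.mem_supp_iff, ← hx]
    exact (SimpleGraph.ConnectedComponent.eq.mpr ⟨(p.takeUntil u hu).reverse⟩)
  obtain ⟨q⟩ := walk_toInduce p x.2 y.2 hsupp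
  exact ⟨q⟩

open Classical in
include hτ0 hs0 hdec hadjpar hcount hτB in
lemma component_reach {c : (G.induce {u : V | u ≠ v}).ConnectedComponent} (σ : ↥c.supp) :
    ∃ R ≤ 2 * (B - τ (entryF s v τ par σ.1.1)) +
        ∑ e ∈ (entriesOf G s v τ par c).erase (entryF s v τ par σ.1.1), (2 * (B - τ e) + 1),
      Reach ((G.induce {u : V | u ≠ v}).induce c.supp) {σ} Set.univ R := by
  classical
  have hσE : entryF s v τ par σ.1.1 ∈ entriesOf G s v τ par c :=
    (mem_entriesOf).mpr ⟨σ, rfl⟩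
  have huniv : ∀ x : ↥c.supp, entryF s v τ par x.1.1 ∈ entriesOf G s v τ par c :=
    fun x => (mem_entriesOf).mpr ⟨x, rfl⟩
  have key : ∀ (k : ℕ) (F : Finset V), F ⊆ entriesOf G s v τ par c →
      entryF s v τ par σ.1.1 ∈ F → ((entriesOf G s v τ par c) \ F).card = k →
      (∃ R ≤ 2 * (B - τ (entryF s v τ par σ.1.1)) + ∑ e ∈ F.erase (entryF s v τ par σ.1.1), (2 * (B - τ e) + 1),
        Reach ((G.induce {u : V | u ≠ v}).induce c.supp) {σ} {x : ↥c.supp | entryF s v τ par x.1.1 ∈ F} R) →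
      ∃ R ≤ 2 * (B - τ (entryF s v τ par σ.1.1)) +
          ∑ e ∈ (entriesOf G s v τ par c).erase (entryF s v τ par σ.1.1), (2 * (B - τ e) + 1),
        Reach ((G.induce {u : V | u ≠ v}).induce c.supp) {σ} Set.univ R := by
    intro k
    induction k with
    | zero =>
      intro F hFsub hF0 hcard hex
      obtain ⟨R, hRle, hreach⟩ := hex
      have hFE : F = entriesOf G s v τ par c := by
        apply Finset.Subset.antisymm hFsub
        intro e he
        by_contra hc
        have : e ∈ entriesOf G s v τ par c \ F := Finset.mem_sdiff.mpr ⟨he, hc⟩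
        rw [Finset.card_eq_zero] at hcard
        rw [hcard] at this
        exact absurd this (Finset.notMem_empty e)
      have hU : {x : ↥c.supp | entryF s v τ par x.1.1 ∈ F} = Set.univ := by
        apply Set.eq_univ_of_forall
        intro x
        rw [hFE]
        exact huniv x
      rw [hU] at hreach
      rw [hFE] at hRle
      exact ⟨R, hRle, hreach⟩
    | succ k ih =>
      intro F hFsub hF0 hcard hex
      obtain ⟨R, hRle, hreach⟩ := hex
      have hne : ((entriesOf G s v τ par c) \ F).Nonempty := by
        rw [← Finset.card_pos, hcard]; omega
      obtain ⟨e', he'⟩ := hne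
      rw [Finset.mem_sdiff] at he'
      obtain ⟨y, hy⟩ := (mem_entriesOf).mp he'.1
      have hyD : y ∉ {x : ↥c.supp | entryF s v τ par x.1.1 ∈ F} := by
        intro hmem
        rw [Set.mem_setOf_eq, hy] at hmem
        exact he'.2 hmem
      have hσD : σ ∈ {x : ↥c.supp | entryF s v τ par x.1.1 ∈ F} := hF0
      obtain ⟨p⟩ := comp_reachable (c := c) σ y
      obtain ⟨d, -, hd1, hd2⟩ := p.exists_boundary_dart _ hσD hyD
      have hz : entryF s v τ par d.snd.1.1 ∈ entriesOf G s v τ par c := huniv d.snd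
      have hzF : entryF s v τ par d.snd.1.1 ∉ F := hd2
      have hstep : Reach ((G.induce {u : V | u ≠ v}).induce c.supp) {x : ↥c.supp | entryF s v τ par x.1.1 ∈ F}
          (insert d.snd {x : ↥c.supp | entryF s v τ par x.1.1 ∈ F}) 1 := reach_step hd1 d.adj
      have hcl := cluster_reach hτ0 hs0 hdec hadjpar hcount hτB
        (insert d.snd {x : ↥c.supp | entryF s v τ par x.1.1 ∈ F}) d.snd (Set.mem_insert _ _)
      have hseteq : insert d.snd {x : ↥c.supp | entryF s v τ par x.1.1 ∈ F} ∪
          {x : ↥c.supp | entryF s v τ par x.1.1 = entryF s v τ par d.snd.1.1} =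
          {x : ↥c.supp | entryF s v τ par x.1.1 ∈ insert (entryF s v τ par d.snd.1.1) F} := by
        ext x
        simp only [Set.mem_union, Set.mem_insert_iff, Set.mem_setOf_eq, Finset.mem_insert]
        constructor
        · rintro ((rfl | hx) | hx)
          · exact Or.inl rfl
          · exact Or.inr hx
          · exact Or.inl hx
        · rintro (hx | hx)
          · exact Or.inr hx
          · exact Or.inl (Or.inr hx)
      rw [hseteq] at hcl
      have hcomb := reach_trans (reach_trans hreach hstep) hcl
      have he'0 : entryF s v τ par d.snd.1.1 ≠ entryF s v τ par σ.1.1 := fun h => hzF (h ▸ hF0)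
      refine ih (insert (entryF s v τ par d.snd.1.1) F)
        (Finset.insert_subset hz hFsub) (Finset.mem_insert_of_mem hF0) ?_
        ⟨R + 1 + 2 * (B - τ (entryF s v τ par d.snd.1.1)), ?_, hcomb⟩
      · rw [Finset.sdiff_insert]
        rw [Finset.card_erase_of_mem (Finset.mem_sdiff.mpr ⟨hz, hzF⟩), hcard]
        omega
      · have hsum : ∑ e ∈ (insert (entryF s v τ par d.snd.1.1) F).erase (entryF s v τ par σ.1.1), (2 * (B - τ e) + 1) =
            (2 * (B - τ (entryF s v τ par d.snd.1.1)) + 1) + ∑ e ∈ F.erase (entryF s v τ par σ.1.1), (2 * (B - τ e) + 1) := by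
          rw [Finset.erase_insert_of_ne he'0]
          rw [Finset.sum_insert (fun h => hzF (Finset.mem_of_mem_erase h))]
        omega
  -- base case
  have hbase := cluster_reach hτ0 hs0 hdec hadjpar hcount hτB
    (c := c) ({σ} : Set ↥c.supp) σ rfl
  have hseteq0 : ({σ} : Set ↥c.supp) ∪ {x : ↥c.supp | entryF s v τ par x.1.1 = entryF s v τ par σ.1.1} =
      {x : ↥c.supp | entryF s v τ par x.1.1 ∈ ({(entryF s v τ par σ.1.1)} : Finset V)} := by
    ext x
    simp only [Set.union_def, Set.mem_setOf_eq, Set.mem_singleton_iff, Finset.mem_singleton]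
    constructor
    · rintro (rfl | hx)
      · exact rfl
      · exact hx
    · exact fun hx => Or.inr hx
  rw [hseteq0] at hbase
  refine key ((entriesOf G s v τ par c) \ {(entryF s v τ par σ.1.1)}).card {(entryF s v τ par σ.1.1)}
    (Finset.singleton_subset_iff.mpr hσE) (Finset.mem_singleton_self _) rfl
    ⟨2 * (B - τ (entryF s v τ par σ.1.1)), ?_, hbase⟩
  simp

end Main

lemma sum_aux : ∀ b : ℕ, (∑ t ∈ Finset.Icc 1 b, 2 * (b - t)) + b = b * b := by
  intro b
  induction b with
  | zero => simp
  | succ b ih =>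
    rw [Finset.sum_Icc_succ_top (by omega : 1 ≤ b + 1)]
    have hcongr : ∑ t ∈ Finset.Icc 1 b, 2 * (b + 1 - t) =
        ∑ t ∈ Finset.Icc 1 b, (2 * (b - t) + 2) := by
      apply Finset.sum_congr rfl
      intro t ht
      rw [Finset.mem_Icc] at ht
      omega
    rw [hcongr, Finset.sum_add_distrib, Finset.sum_const, Nat.card_Icc]
    have hsq : (b + 1) * (b + 1) = b * b + 2 * b + 1 := by ring
    simp only [smul_eq_mul]
    omega

end BrAux

theorem sum_component_broadcast_le {V : Type*} [Fintype V] (G : SimpleGraph V)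
    (hG : G.Connected) (s v : V)
    (srcs : ∀ c : (G.induce {u | u ≠ v}).ConnectedComponent, ↥c.supp) :
    ∑ᶠ c : (G.induce {u | u ≠ v}).ConnectedComponent,
        broadcastTime ((G.induce {u | u ≠ v}).induce c.supp) (srcs c)
      ≤ broadcastTime G s * (2 * broadcastTime G s + 1) := by
  classical
  by_cases hempty : IsEmpty ((G.induce {u | u ≠ v}).ConnectedComponent)
  · rw [finsum_of_isEmpty]
    exact Nat.zero_le _
  have hnecomp : Nonempty ((G.induce {u | u ≠ v}).ConnectedComponent) :=
    not_isEmpty_iff.mp hempty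
  -- the optimal schedule
  have hsetne : {R | ∃ S : ℕ → Set V, S 0 = {s} ∧ IsSchedule G S ∧ S R = Set.univ}.Nonempty := by
    obtain ⟨R, S, hS0, hsch, hSR⟩ := BrAux.reach_exists hG.preconnected
      (Set.ncard ({s} : Set V)ᶜ) {s} ⟨s, rfl⟩ le_rfl
    exact ⟨R, S, hS0, hsch, hSR⟩
  have hBmem : broadcastTime G s ∈
      {R | ∃ S : ℕ → Set V, S 0 = {s} ∧ IsSchedule G S ∧ S R = Set.univ} :=
    Nat.sInf_mem hsetne
  obtain ⟨S, hS0, hsch, hSB⟩ := hBmem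
  set B := broadcastTime G s with hBdef
  -- informing times
  set τ : V → ℕ := fun w => sInf {t | w ∈ S t} with hτdef
  have hτmem : ∀ w, w ∈ S (τ w) := by
    intro w
    have hB : B ∈ {t | w ∈ S t} := by
      show w ∈ S B
      rw [hSB]; trivial
    exact Nat.sInf_mem ⟨B, hB⟩
  have hτle : ∀ w t, w ∈ S t → τ w ≤ t := fun w t ht => Nat.sInf_le ht
  have hτB : ∀ w, τ w ≤ B := fun w => hτle w B (by rw [hSB]; trivial)
  have hτ0 : ∀ w, τ w = 0 → w = s := by
    intro w h
    have := hτmem w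
    rw [h, hS0] at this
    exact this
  have hs0 : τ s = 0 := Nat.le_zero.mp (hτle s 0 (by rw [hS0]; rfl))
  -- the callers
  choose f hf1 hf2 using fun t => (hsch t).2
  set par : V → V := fun w => if w = s then s else f (τ w - 1) w with hpardef
  have hparspec : ∀ w, w ≠ s → par w = f (τ w - 1) w := by
    intro w hws
    show (if w = s then s else f (τ w - 1) w) = f (τ w - 1) w
    rw [if_neg hws]
  have hτpos : ∀ w, w ≠ s → 1 ≤ τ w := by
    intro w hws
    by_contra h
    exact hws (hτ0 w (by omega))
  have hmemdiff : ∀ w, w ≠ s → w ∈ S ((τ w - 1) + 1) \ S (τ w - 1) := by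
    intro w hws
    have h1 : (τ w - 1) + 1 = τ w := by have := hτpos w hws; omega
    constructor
    · rw [h1]; exact hτmem w
    · intro hc
      have := hτle w (τ w - 1) hc
      have := hτpos w hws
      omega
  have hadjpar : ∀ w, w ≠ s → G.Adj (par w) w := by
    intro w hws
    rw [hparspec w hws]
    exact (hf1 (τ w - 1) w (hmemdiff w hws)).2
  have hparmem : ∀ w, w ≠ s → par w ∈ S (τ w - 1) := by
    intro w hws
    rw [hparspec w hws]
    exact (hf1 (τ w - 1) w (hmemdiff w hws)).1
  have hdec : ∀ w, w ≠ s → τ (par w) < τ w := by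
    intro w hws
    have := hτle (par w) (τ w - 1) (hparmem w hws)
    have := hτpos w hws
    omega
  have hcount : ∀ (t : ℕ) (u : V), Set.ncard {w | τ w = t + 1 ∧ par w = u} ≤ 1 := by
    intro t u
    refine le_trans (Set.ncard_le_ncard ?_ (Set.toFinite _)) (hf2 t u)
    rintro w ⟨hw1, hw2⟩
    have hws : w ≠ s := by
      intro h
      rw [h, hs0] at hw1
      omega
    have h1 : τ w - 1 = t := by omega
    have hd := hmemdiff w hws
    rw [h1] at hd
    refine ⟨hd, ?_⟩
    rw [← hw2, hparspec w hws, h1]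
  -- per-component bounds
  haveI : Fintype ((G.induce {u | u ≠ v}).ConnectedComponent) := Fintype.ofFinite _
  rw [finsum_eq_sum_of_fintype]
  have hcompbound : ∀ c : (G.induce {u | u ≠ v}).ConnectedComponent,
      broadcastTime ((G.induce {u | u ≠ v}).induce c.supp) (srcs c) ≤
        (∑ e ∈ BrAux.entriesOf G s v τ par c, 2 * (B - τ e)) +
          ((BrAux.entriesOf G s v τ par c).card - 1) := by
    intro c
    obtain ⟨R, hRle, hreach⟩ := BrAux.component_reach hτ0 hs0 hdec hadjpar hcount hτB (srcs c)
    have hb := BrAux.broadcastTime_le hreach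
    have he0 : BrAux.entryF s v τ par (srcs c).1.1 ∈ BrAux.entriesOf G s v τ par c :=
      BrAux.mem_entriesOf.mpr ⟨srcs c, rfl⟩
    have hsum1 : ∑ e ∈ (BrAux.entriesOf G s v τ par c).erase
          (BrAux.entryF s v τ par (srcs c).1.1), (2 * (B - τ e) + 1) =
        (∑ e ∈ (BrAux.entriesOf G s v τ par c).erase
          (BrAux.entryF s v τ par (srcs c).1.1), 2 * (B - τ e)) +
          ((BrAux.entriesOf G s v τ par c).card - 1) := by
      rw [Finset.sum_add_distrib, Finset.sum_const, Finset.card_erase_of_mem he0]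
      simp
    have hsum2 : 2 * (B - τ (BrAux.entryF s v τ par (srcs c).1.1)) +
        ∑ e ∈ (BrAux.entriesOf G s v τ par c).erase
          (BrAux.entryF s v τ par (srcs c).1.1), 2 * (B - τ e) =
        ∑ e ∈ BrAux.entriesOf G s v τ par c, 2 * (B - τ e) :=
      Finset.add_sum_erase _ (fun e => 2 * (B - τ e)) he0
    omega
  -- entries determine their component
  have hentcomp : ∀ (c : (G.induce {u | u ≠ v}).ConnectedComponent) (e : V),
      e ∈ BrAux.entriesOf G s v τ par c →
      ∃ (he : e ≠ v), (G.induce {u | u ≠ v}).connectedComponentMk ⟨e, he⟩ = c := by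
    intro c e he
    obtain ⟨x, hx⟩ := BrAux.mem_entriesOf.mp he
    obtain ⟨hev, hec⟩ := BrAux.ent_mem_supp hτ0 hdec hadjpar (c := c) x
    rw [SimpleGraph.ConnectedComponent.mem_supp_iff] at hec
    subst hx
    exact ⟨hev, hec⟩
  have hdisj : ∀ c₁ ∈ (Finset.univ : Finset ((G.induce {u | u ≠ v}).ConnectedComponent)),
      ∀ c₂ ∈ (Finset.univ : Finset ((G.induce {u | u ≠ v}).ConnectedComponent)),
      c₁ ≠ c₂ → Disjoint (BrAux.entriesOf G s v τ par c₁) (BrAux.entriesOf G s v τ par c₂) := by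
    intro c₁ _ c₂ _ hne
    rw [Finset.disjoint_left]
    intro e he1 he2
    obtain ⟨hv1, hc1⟩ := hentcomp c₁ e he1
    obtain ⟨hv2, hc2⟩ := hentcomp c₂ e he2
    exact hne (hc1.symm.trans hc2)
  -- properties of entries
  have hEprops : ∀ (c : (G.induce {u | u ≠ v}).ConnectedComponent) (e : V),
      e ∈ BrAux.entriesOf G s v τ par c → e ≠ v ∧ (e = s ∨ par e = v) := by
    intro c e he
    obtain ⟨x, hx⟩ := BrAux.mem_entriesOf.mp he
    have hisE := BrAux.entryF_isEntry (v := v) hτ0 hdec x.1.1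
    rw [hx] at hisE
    obtain ⟨hv1, -⟩ := hentcomp c e he
    exact ⟨hv1, hisE⟩
  -- the global entry set
  set EU : Finset V :=
    Finset.univ.biUnion (fun c => BrAux.entriesOf G s v τ par c) with hEU
  have hEUprops : ∀ e ∈ EU, e ≠ v ∧ (e = s ∨ par e = v) := by
    intro e he
    rw [hEU, Finset.mem_biUnion] at he
    obtain ⟨c, -, hc⟩ := he
    exact hEprops c e hc
  have hinj : Set.InjOn τ ↑(EU.erase s) := by
    intro e₁ he₁ e₂ he₂ heq
    rw [Finset.coe_erase, Set.mem_diff, Set.mem_singleton_iff] at he₁ he₂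
    have hp₁ := hEUprops e₁ (by exact_mod_cast he₁.1)
    have hp₂ := hEUprops e₂ (by exact_mod_cast he₂.1)
    have hv₁ : par e₁ = v := hp₁.2.resolve_left he₁.2
    have hv₂ : par e₂ = v := hp₂.2.resolve_left he₂.2
    have ht₁ : 1 ≤ τ e₁ := hτpos e₁ he₁.2
    by_contra hneq
    have hsub : ({e₁, e₂} : Set V) ⊆ {w | τ w = (τ e₁ - 1) + 1 ∧ par w = v} := by
      rintro w (rfl | rfl)
      · exact ⟨by omega, hv₁⟩
      · exact ⟨by omega, hv₂⟩
    have h2 : ({e₁, e₂} : Set V).ncard = 2 := Set.ncard_pair hneq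
    have h3 := Set.ncard_le_ncard hsub (Set.toFinite _)
    have h4 := hcount (τ e₁ - 1) v
    omega
  have himage : (EU.erase s).image τ ⊆ Finset.Icc 1 B := by
    intro t ht
    rw [Finset.mem_image] at ht
    obtain ⟨e, he, rfl⟩ := ht
    rw [Finset.mem_Icc]
    have hes : e ≠ s := Finset.ne_of_mem_erase he
    exact ⟨hτpos e hes, hτB e⟩
  have hsumerase : ∑ e ∈ EU.erase s, 2 * (B - τ e) ≤ ∑ t ∈ Finset.Icc 1 B, 2 * (B - t) := by
    have h5 : ∑ t ∈ (EU.erase s).image τ, 2 * (B - t) = ∑ e ∈ EU.erase s, 2 * (B - τ e) :=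
      Finset.sum_image (fun x hx y hy h => hinj (Finset.mem_coe.mpr hx) (Finset.mem_coe.mpr hy) h)
    rw [← h5]
    exact Finset.sum_le_sum_of_subset himage
  have hEUsum : ∑ e ∈ EU, 2 * (B - τ e) ≤ 2 * B + ∑ t ∈ Finset.Icc 1 B, 2 * (B - t) := by
    by_cases hsEU : s ∈ EU
    · have h6 := Finset.add_sum_erase EU (fun e => 2 * (B - τ e)) hsEU
      omega
    · rw [← Finset.erase_eq_of_notMem hsEU]
      omega
  -- counting entries
  have hcardbound : EU.card ≤ B + 1 := by
    have hsub2 : EU ⊆ insert s (EU.erase s) := by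
      intro e he
      by_cases hes : e = s
      · subst hes; exact Finset.mem_insert_self e _
      · exact Finset.mem_insert_of_mem (Finset.mem_erase.mpr ⟨hes, he⟩)
    have h1 := Finset.card_le_card hsub2
    have h2 := Finset.card_insert_le s (EU.erase s)
    have h3 : (EU.erase s).card = ((EU.erase s).image τ).card :=
      (Finset.card_image_of_injOn hinj).symm
    have h4 := Finset.card_le_card himage
    rw [Nat.card_Icc] at h4
    omega
  have hcardEc : ∀ c, 1 ≤ (BrAux.entriesOf G s v τ par c).card := by
    intro c
    rw [Nat.one_le_iff_ne_zero, ← Nat.pos_iff_ne_zero, Finset.card_pos]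
    exact ⟨_, BrAux.mem_entriesOf.mpr ⟨srcs c, rfl⟩⟩
  have hcards : (∑ c : (G.induce {u | u ≠ v}).ConnectedComponent,
      ((BrAux.entriesOf G s v τ par c).card - 1)) +
      Fintype.card ((G.induce {u | u ≠ v}).ConnectedComponent) = EU.card := by
    rw [hEU, Finset.card_biUnion hdisj]
    have h8 : Fintype.card ((G.induce {u | u ≠ v}).ConnectedComponent) =
        ∑ _c : (G.induce {u | u ≠ v}).ConnectedComponent, 1 := by
      rw [Finset.sum_const, smul_eq_mul, mul_one, Finset.card_univ]
    rw [h8, ← Finset.sum_add_distrib]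
    apply Finset.sum_congr rfl
    intro c _
    have := hcardEc c
    omega
  have hp1 : 1 ≤ Fintype.card ((G.induce {u | u ≠ v}).ConnectedComponent) :=
    Fintype.card_pos
  -- put everything together
  have hEUsum2 : (∑ c : (G.induce {u | u ≠ v}).ConnectedComponent,
      ∑ e ∈ BrAux.entriesOf G s v τ par c, 2 * (B - τ e)) = ∑ e ∈ EU, 2 * (B - τ e) := by
    rw [hEU, Finset.sum_biUnion hdisj]
  have htotal : (∑ c : (G.induce {u | u ≠ v}).ConnectedComponent,
      broadcastTime ((G.induce {u | u ≠ v}).induce c.supp) (srcs c)) ≤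
      (∑ t ∈ Finset.Icc 1 B, 2 * (B - t)) + 3 * B := by
    calc (∑ c : (G.induce {u | u ≠ v}).ConnectedComponent,
        broadcastTime ((G.induce {u | u ≠ v}).induce c.supp) (srcs c))
        ≤ ∑ c : (G.induce {u | u ≠ v}).ConnectedComponent,
            ((∑ e ∈ BrAux.entriesOf G s v τ par c, 2 * (B - τ e)) +
              ((BrAux.entriesOf G s v τ par c).card - 1)) :=
          Finset.sum_le_sum (fun c _ => hcompbound c)
      _ = (∑ c : (G.induce {u | u ≠ v}).ConnectedComponent,
            ∑ e ∈ BrAux.entriesOf G s v τ par c, 2 * (B - τ e)) +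
          (∑ c : (G.induce {u | u ≠ v}).ConnectedComponent,
            ((BrAux.entriesOf G s v τ par c).card - 1)) := Finset.sum_add_distrib
      _ ≤ (∑ t ∈ Finset.Icc 1 B, 2 * (B - t)) + 3 * B := by
          rw [hEUsum2]
          omega
  have haux := BrAux.sum_aux B
  calc (∑ c : (G.induce {u | u ≠ v}).ConnectedComponent,
      broadcastTime ((G.induce {u | u ≠ v}).induce c.supp) (srcs c))
      ≤ (∑ t ∈ Finset.Icc 1 B, 2 * (B - t)) + 3 * B := htotal
    _ ≤ 2 * ((∑ t ∈ Finset.Icc 1 B, 2 * (B - t)) + B) + B := by omega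
    _ = 2 * (B * B) + B := by rw [haux]
    _ = B * (2 * B + 1) := by ring
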